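/- If A = [[Φ + ηI, P],[Pᵀ, 0]] where Φ is symmetric positive semidefinite on the kernel of Pᵀ (i.e., λᵀΦλ ≥ 0 whenever Pᵀλ = 0), η > 0, and P has full column rank, then for any B = [[P̂ᵀ],[Φ̂]] appended, the trailing Schur complement (Ĉ + ηI) − BᵀA⁻¹B of the regularized extended kernel system is positive definite, where the extended matrix is the kernel matrix of the regularized kernel φ̃(x_i,x_j) = φ(x_i,x_j) + η δ_ij on the enlarged point set. -/

import Mathlib

open Matrix

/-- for the regularized RBF system, the trailing Schur complement
of the extended kernel system is positive definite.  Here `Φ` is the kernel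
matrix on the old points, `Φhat` the cross-kernel block, `φhat` the kernel
matrix on the `k` new points, `P` and `Phat` the polynomial blocks, and the
unregularized full kernel block is positive semidefinite on the null space of
the extended polynomial matrix. -/
theorem regularized_schur_complement_posdef
    (n m k : ℕ) (η : ℝ) (hη : 0 < η)
    (Φ : Matrix (Fin n) (Fin n) ℝ)
    (Φhat : Matrix (Fin n) (Fin k) ℝ)
    (φhat : Matrix (Fin k) (Fin k) ℝ)
    (P : Matrix (Fin n) (Fin m) ℝ)
    (Phat : Matrix (Fin k) (Fin m) ℝ)
    (hΦsymm : Φ.IsSymm) (hφhatsymm : φhat.IsSymm)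
    (hrank : P.rank = m)
    -- conditional positive semidefiniteness of the full kernel block on the
    -- null space of the extended polynomial constraint matrix
    (Pfull : Matrix (Fin n ⊕ Fin k) (Fin m) ℝ)
    (hPfull : Pfull = Matrix.of (Sum.elim (fun i => P i) (fun i => Phat i)))
    (hPSD : ∀ lam : (Fin n ⊕ Fin k) → ℝ,
      Pfullᵀ.mulVec lam = 0 →
      0 ≤ lam ⬝ᵥ (Matrix.fromBlocks Φ Φhat Φhatᵀ φhat).mulVec lam)
    (A : Matrix (Fin n ⊕ Fin m) (Fin n ⊕ Fin m) ℝ)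
    (hA : A = Matrix.fromBlocks (Φ + η • (1 : Matrix (Fin n) (Fin n) ℝ)) P Pᵀ 0)
    (B : Matrix (Fin n ⊕ Fin m) (Fin k) ℝ)
    (hB : B = Matrix.of (Sum.elim (fun i j => Φhat i j) (fun i j => Phat j i))) :
    (φhat + η • (1 : Matrix (Fin k) (Fin k) ℝ) - Bᵀ * A⁻¹ * B).PosDef := by
  have hPfull' : Pfull = fromRows P Phat := hPfull
  have hB' : B = fromRows Φhat Phatᵀ := hB
  clear hPfull hB
  subst hPfull' hB' hA
  set Φη := Φ + η • (1 : Matrix (Fin n) (Fin n) ℝ) with hΦη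
  set A := fromBlocks Φη P Pᵀ (0 : Matrix (Fin m) (Fin m) ℝ) with hA
  -- Φη applied
  have hΦηv : ∀ v : Fin n → ℝ, Φη *ᵥ v = Φ *ᵥ v + η • v := by
    intro v
    rw [hΦη, add_mulVec, smul_mulVec, one_mulVec]
  -- P is injective
  have hPinj : ∀ μ : Fin m → ℝ, P *ᵥ μ = 0 → μ = 0 := by
    intro μ hμ
    have hker : LinearMap.ker P.mulVecLin = ⊥ := by
      have h1 := LinearMap.finrank_range_add_finrank_ker P.mulVecLin
      rw [Module.finrank_fin_fun] at h1
      have h2 : Module.finrank ℝ (LinearMap.ker P.mulVecLin) = 0 := by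
        have : P.rank = Module.finrank ℝ (LinearMap.range P.mulVecLin) := rfl
        omega
      exact Submodule.finrank_eq_zero.mp h2
    have : P.mulVecLin μ = 0 := by simpa using hμ
    simpa using (LinearMap.ker_eq_bot.mp hker) (by simpa using this)
  -- conditional PSD of Φ on ker Pᵀ
  have hΦpsd : ∀ v : Fin n → ℝ, Pᵀ *ᵥ v = 0 → 0 ≤ v ⬝ᵥ Φ *ᵥ v := by
    intro v hv
    have h := hPSD (Sum.elim v 0) ?_
    · rw [fromBlocks_mulVec] at h
      simpa [mulVec_zero] using h
    · rw [transpose_fromRows, fromCols_mulVec_sumElim]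
      simp [hv]
  -- A is symmetric
  have hAsymm : Aᵀ = A := by
    rw [hA, fromBlocks_transpose, transpose_transpose, transpose_zero,
      hΦη, transpose_add, transpose_smul, transpose_one, hΦsymm]
  -- A is invertible
  have hAunit : IsUnit A := by
    rw [← Matrix.mulVec_injective_iff_isUnit]
    have : Function.Injective A.mulVecLin := by
      rw [← LinearMap.ker_eq_bot, LinearMap.ker_eq_bot']
      intro y hy
      rw [Matrix.mulVecLin_apply, hA, fromBlocks_mulVec] at hy
      have h1 : Φη *ᵥ (y ∘ Sum.inl) + P *ᵥ (y ∘ Sum.inr) = 0 :=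
        funext fun i => congrFun hy (Sum.inl i)
      have h2 : Pᵀ *ᵥ (y ∘ Sum.inl) = 0 := by
        have h := funext fun i => congrFun hy (Sum.inr i)
        simpa [zero_mulVec, funext_iff] using h
      set lam := y ∘ Sum.inl
      set μ := y ∘ Sum.inr
      have hd : lam ⬝ᵥ (Φη *ᵥ lam + P *ᵥ μ) = 0 := by rw [h1, dotProduct_zero]
      have hcross : lam ⬝ᵥ (P *ᵥ μ) = 0 := by
        rw [dotProduct_mulVec, ← mulVec_transpose, h2, zero_dotProduct]
      rw [dotProduct_add, hcross, add_zero, hΦηv, dotProduct_add, dotProduct_smul] at hd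
      have hpsd := hΦpsd lam h2
      have hself : (0:ℝ) ≤ lam ⬝ᵥ lam :=
        Finset.sum_nonneg fun i _ => mul_self_nonneg _
      rw [smul_eq_mul] at hd
      have hlam0 : lam = 0 := by
        have : lam ⬝ᵥ lam = 0 := by nlinarith [hd, hpsd, hself, hη]
        exact dotProduct_self_eq_zero.mp this
      have hμ0 : μ = 0 := by
        apply hPinj
        have := h1
        rw [hlam0, mulVec_zero, zero_add] at this
        exact this
      funext x
      cases x with
      | inl i => exact congrFun hlam0 i
      | inr i => exact congrFun hμ0 i
    intro x y hxy
    exact this (by simpa using hxy)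
  have hAdet : IsUnit A.det := (Matrix.isUnit_iff_isUnit_det A).mp hAunit
  rw [posDef_iff_dotProduct_mulVec]
  constructor
  · -- Hermitian
    rw [Matrix.IsHermitian, conjTranspose_eq_transpose_of_trivial, transpose_sub,
      transpose_add, transpose_smul, transpose_one, hφhatsymm.eq, transpose_mul,
      transpose_mul, transpose_transpose, transpose_nonsing_inv, hAsymm, Matrix.mul_assoc]
  · intro c hc
    set y := A⁻¹ *ᵥ (fromRows Φhat Phatᵀ *ᵥ c) with hy
    have hAy : A *ᵥ y = fromRows Φhat Phatᵀ *ᵥ c := by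
      rw [hy, mulVec_mulVec, Matrix.mul_nonsing_inv _ hAdet, one_mulVec]
    set lam := y ∘ Sum.inl with hlam
    set μ := y ∘ Sum.inr with hμ
    have hAy' := hAy
    rw [hA, fromBlocks_mulVec, fromRows_mulVec] at hAy'
    have eq1 : Φη *ᵥ lam + P *ᵥ μ = Φhat *ᵥ c :=
      funext fun i => congrFun hAy' (Sum.inl i)
    have eq2 : Pᵀ *ᵥ lam = Phatᵀ *ᵥ c := by
      have h := funext fun i => congrFun hAy' (Sum.inr i)
      simpa [zero_mulVec] using h
    -- the quadratic form of the big system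
    have hconstraint : (fromRows P Phat)ᵀ *ᵥ Sum.elim (-lam) c = 0 := by
      rw [transpose_fromRows, fromCols_mulVec_sumElim, mulVec_neg, eq2]
      simp
    have hQ := hPSD _ hconstraint
    have hswap : c ⬝ᵥ (Φhatᵀ *ᵥ lam) = (Φhat *ᵥ c) ⬝ᵥ lam := by
      rw [dotProduct_mulVec, vecMul_transpose]
    have hQ' : 0 ≤ lam ⬝ᵥ (Φ *ᵥ lam) - lam ⬝ᵥ (Φhat *ᵥ c) - (Φhat *ᵥ c) ⬝ᵥ lam
        + c ⬝ᵥ (φhat *ᵥ c) := by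
      rw [fromBlocks_mulVec] at hQ
      simp only [Sum.elim_comp_inl, Sum.elim_comp_inr, sumElim_dotProduct_sumElim,
        mulVec_neg, neg_dotProduct, dotProduct_neg, dotProduct_add] at hQ
      rw [hswap] at hQ
      linarith [hQ]
    -- compute the Schur quadratic form
    have hform : c ⬝ᵥ ((φhat + η • (1 : Matrix (Fin k) (Fin k) ℝ)
        - (fromRows Φhat Phatᵀ)ᵀ * A⁻¹ * fromRows Φhat Phatᵀ) *ᵥ c)
        = c ⬝ᵥ (φhat *ᵥ c) + η * (c ⬝ᵥ c) - (A *ᵥ y) ⬝ᵥ y := by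
      have hbt : c ⬝ᵥ ((fromRows Φhat Phatᵀ)ᵀ *ᵥ y) = (A *ᵥ y) ⬝ᵥ y := by
        rw [dotProduct_mulVec, vecMul_transpose, hAy]
      rw [sub_mulVec, dotProduct_sub, add_mulVec, smul_mulVec, one_mulVec,
        dotProduct_add, dotProduct_smul, smul_eq_mul, Matrix.mul_assoc,
        ← mulVec_mulVec, ← mulVec_mulVec, ← hy, hbt]
    have hAyy : (A *ᵥ y) ⬝ᵥ y = (Φhat *ᵥ c) ⬝ᵥ lam + lam ⬝ᵥ (Φhat *ᵥ c)
        - lam ⬝ᵥ (Φ *ᵥ lam) - η * (lam ⬝ᵥ lam) := by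
      rw [hAy]
      have : fromRows Φhat Phatᵀ *ᵥ c ⬝ᵥ y
          = (Φhat *ᵥ c) ⬝ᵥ lam + (Phatᵀ *ᵥ c) ⬝ᵥ μ := by
        conv_lhs => rw [← Sum.elim_comp_inl_inr y]
        rw [fromRows_mulVec, sumElim_dotProduct_sumElim]
      rw [this, ← eq2]
      have h3 : (Pᵀ *ᵥ lam) ⬝ᵥ μ = lam ⬝ᵥ (P *ᵥ μ) := by
        rw [mulVec_transpose, ← dotProduct_mulVec]
      have h4 : P *ᵥ μ = Φhat *ᵥ c - Φη *ᵥ lam := eq_sub_of_add_eq' eq1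
      rw [h3, h4, dotProduct_sub, hΦηv, dotProduct_add, dotProduct_smul, smul_eq_mul]
      ring
    have hcc : 0 < c ⬝ᵥ c := by
      rcases lt_or_eq_of_le (Finset.sum_nonneg fun i _ => mul_self_nonneg _ : (0:ℝ) ≤ c ⬝ᵥ c) with h | h
      · exact h
      · exact absurd (dotProduct_self_eq_zero.mp h.symm) hc
    have hll : 0 ≤ lam ⬝ᵥ lam := Finset.sum_nonneg fun i _ => mul_self_nonneg _
    have : star c = c := rfl
    rw [this, hform, hAyy]
    nlinarith [hQ', hcc, hll]
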